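/- Let n ≥ 2 and k > 0, and let g ∈ L²(S^{n−1}) be a complex-valued square-integrable function on the unit sphere with respect to the surface measure. If the Herglotz wave v_g(x) = ∫_{S^{n−1}} exp(i k x·d) g(d) ds(d) vanishes for all x in some nonempty open subset of ℝⁿ, then g = 0 almost everywhere on S^{n−1} with respect to the surface measure. -/

import Mathlib

open MeasureTheory Metric Complex Filter Topology
set_option maxHeartbeats 1000000

variable {n : ℕ}

local notation "Sph" => sphere (0 : EuclideanSpace ℝ (Fin n)) 1

private lemma ip_eq_inner (x : EuclideanSpace ℝ (Fin n)) (d : Sph) :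
    (∑ i, x i * (d : EuclideanSpace ℝ (Fin n)) i) = inner ℝ x (d : EuclideanSpace ℝ (Fin n)) := by
  simp [PiLp.inner_apply, RCLike.inner_apply, mul_comm]

private lemma ip_bound (x : EuclideanSpace ℝ (Fin n)) (d : Sph) :
    |∑ i, x i * (d : EuclideanSpace ℝ (Fin n)) i| ≤ ‖x‖ := by
  rw [ip_eq_inner]
  have := abs_real_inner_le_norm x (d : EuclideanSpace ℝ (Fin n))
  simpa [norm_eq_of_mem_sphere] using this

private lemma ip_cont (x : EuclideanSpace ℝ (Fin n)) :
    Continuous (fun d : Sph => (∑ i, x i * (d : EuclideanSpace ℝ (Fin n)) i)) :=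
  continuous_finset_sum _ fun i _ => continuous_const.mul
    ((EuclideanSpace.proj (𝕜 := ℝ) i).continuous.comp continuous_subtype_val)

-- Step A auxiliary: entire-ness of the parameter integral and vanishing spread
private lemma integrable_exp_mul {μ : Measure Sph} [IsFiniteMeasure μ] {g : Sph → ℂ}
    (hgi : Integrable g μ) {c w : Sph → ℂ} (hc : Continuous c) (hw : Continuous w)
    {Cw : ℝ} (hwb : ∀ d, ‖w d‖ ≤ Cw) (hcre : ∀ d, (c d).re = 0) (t : ℂ) :
    Integrable (fun d => Complex.exp (c d + t * w d) * g d) μ := by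
  refine hgi.bdd_mul (c := Real.exp (‖t‖ * Cw)) ?_ (Eventually.of_forall fun d => ?_)
  · exact (Complex.continuous_exp.comp (hc.add (continuous_const.mul hw))).aestronglyMeasurable
  · rw [Complex.norm_exp]
    apply Real.exp_le_exp.2
    have : (c d + t * w d).re = (t * w d).re := by simp [hcre d]
    rw [this]
    calc (t * w d).re ≤ ‖t * w d‖ := Complex.re_le_norm _
      _ = ‖t‖ * ‖w d‖ := by simp [map_mul]
      _ ≤ ‖t‖ * Cw := by
          exact mul_le_mul_of_nonneg_left (hwb d) (norm_nonneg t)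

private lemma entire_param {μ : Measure Sph} [IsFiniteMeasure μ] {g : Sph → ℂ}
    (hgi : Integrable g μ) {c w : Sph → ℂ} (hc : Continuous c) (hw : Continuous w)
    {Cw : ℝ} (hCw : 0 ≤ Cw) (hwb : ∀ d, ‖w d‖ ≤ Cw) (hcre : ∀ d, (c d).re = 0) :
    Differentiable ℂ (fun t => ∫ d, Complex.exp (c d + t * w d) * g d ∂μ) := by
  intro t₀
  have key := hasDerivAt_integral_of_dominated_loc_of_deriv_le (μ := μ)
    (F := fun t d => Complex.exp (c d + t * w d) * g d)
    (F' := fun t d => Complex.exp (c d + t * w d) * w d * g d)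
    (bound := fun d => Real.exp ((‖t₀‖ + 1) * Cw) * Cw * ‖g d‖)
    (x₀ := t₀) (ball_mem_nhds t₀ one_pos)
    (Eventually.of_forall fun t =>
      (integrable_exp_mul hgi hc hw hwb hcre t).aestronglyMeasurable)
    (integrable_exp_mul hgi hc hw hwb hcre t₀)
    (((Complex.continuous_exp.comp (hc.add (continuous_const.mul hw))).mul
        hw).aestronglyMeasurable.mul hgi.aestronglyMeasurable)
    ?_ ?_ ?_
  · exact key.2.differentiableAt
  · refine Eventually.of_forall fun d => fun t ht => ?_
    have hnt : ‖t‖ ≤ ‖t₀‖ + 1 := by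
      have := mem_ball_iff_norm.mp ht
      calc ‖t‖ = ‖t₀ + (t - t₀)‖ := by ring_nf
        _ ≤ ‖t₀‖ + ‖t - t₀‖ := norm_add_le _ _
        _ ≤ ‖t₀‖ + 1 := by linarith
    have hexp : ‖Complex.exp (c d + t * w d)‖ ≤ Real.exp ((‖t₀‖ + 1) * Cw) := by
      rw [Complex.norm_exp]
      apply Real.exp_le_exp.2
      have h1 : (c d + t * w d).re = (t * w d).re := by simp [hcre d]
      rw [h1]
      calc (t * w d).re ≤ ‖t * w d‖ := Complex.re_le_norm _
        _ = ‖t‖ * ‖w d‖ := by simp [map_mul]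
        _ ≤ (‖t₀‖ + 1) * Cw :=
          mul_le_mul hnt (hwb d) (norm_nonneg _) (by positivity)
    calc ‖Complex.exp (c d + t * w d) * w d * g d‖
        = ‖Complex.exp (c d + t * w d)‖ * ‖w d‖ * ‖g d‖ := by
          simp [norm_mul]
      _ ≤ Real.exp ((‖t₀‖ + 1) * Cw) * Cw * ‖g d‖ := by
          gcongr <;> first | exact hexp | exact hwb d
  · exact (hgi.norm.const_mul _)
  · refine Eventually.of_forall fun d => fun t _ => ?_
    have h1 : HasDerivAt (fun t : ℂ => c d + t * w d) (w d) t :=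
      (hasDerivAt_mul_const (w d)).const_add (c d)
    simpa using (h1.cexp.mul_const (g d))

private lemma re_Ikr (k r : ℝ) : (Complex.I * k * (r : ℂ)).re = 0 := by
  have : Complex.I * (k : ℂ) * (r : ℂ) = ((k * r : ℝ) : ℂ) * Complex.I := by push_cast; ring
  rw [this]; simp

private lemma norm_Ikr (k r : ℝ) : ‖Complex.I * k * (r : ℂ)‖ = |k| * |r| := by
  simp [map_mul]

private lemma stepA {μ : Measure Sph} [IsFiniteMeasure μ] {g : Sph → ℂ}
    (hgi : Integrable g μ) (k : ℝ) {x₀ : EuclideanSpace ℝ (Fin n)} {ε : ℝ} (hε : 0 < ε)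
    (hv : ∀ x ∈ ball x₀ ε, ∫ d, Complex.exp (Complex.I * k *
        ((∑ i, x i * (d : EuclideanSpace ℝ (Fin n)) i : ℝ) : ℂ)) * g d ∂μ = 0)
    (x : EuclideanSpace ℝ (Fin n)) :
    ∫ d, Complex.exp (Complex.I * k *
        ((∑ i, x i * (d : EuclideanSpace ℝ (Fin n)) i : ℝ) : ℂ)) * g d ∂μ = 0 := by
  set e := x - x₀ with he
  set c : Sph → ℂ := fun d => Complex.I * k *
    ((∑ i, x₀ i * (d : EuclideanSpace ℝ (Fin n)) i : ℝ) : ℂ) with hc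
  set w : Sph → ℂ := fun d => Complex.I * k *
    ((∑ i, e i * (d : EuclideanSpace ℝ (Fin n)) i : ℝ) : ℂ) with hw
  have hccont : Continuous c :=
    continuous_const.mul (Complex.continuous_ofReal.comp (ip_cont x₀))
  have hwcont : Continuous w :=
    continuous_const.mul (Complex.continuous_ofReal.comp (ip_cont e))
  have hwb : ∀ d, ‖w d‖ ≤ |k| * ‖e‖ := fun d => by
    rw [hw, norm_Ikr]
    exact mul_le_mul_of_nonneg_left (ip_bound e d) (abs_nonneg k)
  have hcre : ∀ d, (c d).re = 0 := fun d => re_Ikr k _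
  set φ : ℂ → ℂ := fun t => ∫ d, Complex.exp (c d + t * w d) * g d ∂μ with hφ
  have hdiff : Differentiable ℂ φ :=
    entire_param hgi hccont hwcont (by positivity) hwb hcre
  -- the integrand at real parameters
  have hreal : ∀ t : ℝ, φ ((t : ℝ) : ℂ) = ∫ d, Complex.exp (Complex.I * k *
      ((∑ i, (x₀ + t • e) i * (d : EuclideanSpace ℝ (Fin n)) i : ℝ) : ℂ)) * g d ∂μ := by
    intro t
    simp only [hφ]
    refine integral_congr_ae (Eventually.of_forall fun d => ?_)
    simp only [hc, hw]
    congr 1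
    have hsum : (∑ i, (x₀ + t • e) i * (d : EuclideanSpace ℝ (Fin n)) i) =
        (∑ i, x₀ i * (d : EuclideanSpace ℝ (Fin n)) i) +
          t * (∑ i, e i * (d : EuclideanSpace ℝ (Fin n)) i) := by
      rw [Finset.mul_sum, ← Finset.sum_add_distrib]
      refine Finset.sum_congr rfl fun i _ => ?_
      simp only [PiLp.add_apply, PiLp.smul_apply, smul_eq_mul]
      ring
    rw [hsum]
    push_cast
    ring
  -- the zeros accumulate at 0
  set δ : ℝ := ε / (2 * (‖e‖ + 1)) with hδ
  have hδpos : 0 < δ := by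
    apply div_pos hε; positivity
  set u : ℕ → ℂ := fun j => ((δ * (1 / (j + 1 : ℝ)) : ℝ) : ℂ) with hu
  have hupos : ∀ j : ℕ, 0 < δ * (1 / (j + 1 : ℝ)) := fun j => by positivity
  have huz : ∀ j : ℕ, φ (u j) = 0 := by
    intro j
    set t : ℝ := δ * (1 / (j + 1 : ℝ)) with ht
    have htδ : t ≤ δ := by
      rw [ht]
      have h1 : (1:ℝ) / (j + 1 : ℝ) ≤ 1 := by
        rw [div_le_one (by positivity)]
        linarith [Nat.cast_nonneg (α := ℝ) j]
      nlinarith [hupos j]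
    have hmem : x₀ + t • e ∈ ball x₀ ε := by
      rw [mem_ball, dist_eq_norm]
      have : ‖x₀ + t • e - x₀‖ = |t| * ‖e‖ := by
        rw [add_sub_cancel_left, norm_smul, Real.norm_eq_abs]
      rw [this, abs_of_pos (hupos j)]
      calc t * ‖e‖ ≤ δ * (‖e‖ + 1) := by nlinarith [hupos j, norm_nonneg e, htδ]
        _ = ε / 2 := by rw [hδ]; field_simp
        _ < ε := by linarith
    rw [hu, hreal]
    exact hv _ hmem
  have htend : Tendsto u atTop (𝓝[≠] (0 : ℂ)) := by
    have h1 : Tendsto (fun j : ℕ => δ * (1 / (j + 1 : ℝ))) atTop (𝓝 0) := by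
      simpa using tendsto_one_div_add_atTop_nhds_zero_nat.const_mul δ
    have h2 : Tendsto u atTop (𝓝 (0 : ℂ)) := by
      have h3 := (Complex.continuous_ofReal.tendsto 0).comp h1
      rw [hu]
      convert h3 using 2 with j <;> simp
    refine tendsto_nhdsWithin_iff.mpr ⟨h2, Eventually.of_forall fun j => ?_⟩
    simp only [hu, Set.mem_compl_iff, Set.mem_singleton_iff, ne_eq]
    exact_mod_cast (hupos j).ne'
  have hfreq : ∃ᶠ z in 𝓝[≠] (0 : ℂ), φ z = 0 :=
    htend.frequently (Filter.Frequently.of_forall huz)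
  have hzero : Set.EqOn φ 0 Set.univ :=
    (hdiff.differentiableOn.analyticOnNhd isOpen_univ).eqOn_zero_of_preconnected_of_frequently_eq_zero
      isPreconnected_univ (Set.mem_univ 0) hfreq
  have hφ1 : φ 1 = 0 := hzero (Set.mem_univ 1)
  simp only [hφ] at hφ1
  rw [← hφ1]
  refine integral_congr_ae (Eventually.of_forall fun d => ?_)
  simp only [hc, hw]
  congr 1
  have hsum : (∑ i, x i * (d : EuclideanSpace ℝ (Fin n)) i) =
      (∑ i, x₀ i * (d : EuclideanSpace ℝ (Fin n)) i) +
        (∑ i, e i * (d : EuclideanSpace ℝ (Fin n)) i) := by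
    rw [← Finset.sum_add_distrib]
    refine Finset.sum_congr rfl fun i _ => ?_
    simp only [he, PiLp.sub_apply]
    ring
  rw [hsum]
  push_cast
  ring

variable (n) in
private noncomputable def char (k : ℝ) (x : EuclideanSpace ℝ (Fin n)) : C(Sph, ℂ) :=
  ⟨fun d => Complex.exp (Complex.I * k *
      ((∑ i, x i * (d : EuclideanSpace ℝ (Fin n)) i : ℝ) : ℂ)),
    Complex.continuous_exp.comp (continuous_const.mul
      (Complex.continuous_ofReal.comp (ip_cont x)))⟩

private lemma char_mul (k : ℝ) (x y : EuclideanSpace ℝ (Fin n)) :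
    char n k x * char n k y = char n k (x + y) := by
  ext d
  show Complex.exp _ * Complex.exp _ = Complex.exp _
  rw [← Complex.exp_add]
  congr 1
  have : (∑ i, (x + y) i * (d : EuclideanSpace ℝ (Fin n)) i) =
      (∑ i, x i * (d : EuclideanSpace ℝ (Fin n)) i) +
        (∑ i, y i * (d : EuclideanSpace ℝ (Fin n)) i) := by
    rw [← Finset.sum_add_distrib]
    exact Finset.sum_congr rfl fun i _ => by simp [PiLp.add_apply]; ring
  rw [this]; push_cast; ring

private lemma char_star (k : ℝ) (x : EuclideanSpace ℝ (Fin n)) :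
    star (char n k x) = char n k (-x) := by
  ext d
  show (starRingEnd ℂ) (Complex.exp _) = Complex.exp _
  rw [← Complex.exp_conj]
  congr 1
  have : (∑ i, (-x) i * (d : EuclideanSpace ℝ (Fin n)) i) =
      -(∑ i, x i * (d : EuclideanSpace ℝ (Fin n)) i) := by
    rw [← Finset.sum_neg_distrib]
    exact Finset.sum_congr rfl fun i _ => by simp [PiLp.neg_apply]
  rw [this]
  simp only [map_mul, Complex.conj_I, Complex.conj_ofReal]
  push_cast
  ring

private lemma char_one (k : ℝ) : char n k 0 = 1 := by
  ext d
  show Complex.exp _ = 1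
  have : (∑ i, (0 : EuclideanSpace ℝ (Fin n)) i * (d : EuclideanSpace ℝ (Fin n)) i) = 0 := by
    simp
  rw [this]
  simp

variable (n) in
private noncomputable def charAlg (k : ℝ) : StarSubalgebra ℂ C(Sph, ℂ) where
  toSubalgebra := (Submodule.span ℂ (Set.range (char n k))).toSubalgebra
    (Submodule.subset_span ⟨0, char_one k⟩)
    (fun a b ha hb => by
      have h1 := Submodule.mul_mem_mul ha hb
      rw [Submodule.span_mul_span] at h1
      refine Submodule.span_le.mpr ?_ h1
      rw [Set.mul_subset_iff]
      rintro _ ⟨x, rfl⟩ _ ⟨y, rfl⟩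
      exact Submodule.subset_span ⟨x + y, (char_mul k x y).symm⟩)
  star_mem' := by
    intro a ha
    induction ha using Submodule.span_induction with
    | mem f hf =>
      obtain ⟨x, rfl⟩ := hf
      exact Submodule.subset_span ⟨-x, (char_star k x).symm⟩
    | zero => simpa using Submodule.zero_mem _
    | add f₁ f₂ h₁ h₂ hh₁ hh₂ => simpa [star_add] using Submodule.add_mem _ hh₁ hh₂
    | smul c f hf hhf => simpa [star_smul] using Submodule.smul_mem _ (starRingEnd ℂ c) hhf

private lemma charAlg_separates (k : ℝ) (hk : 0 < k) :
    ((charAlg n k).toSubalgebra : Subalgebra ℂ C(Sph, ℂ)).SeparatesPoints := by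
  intro d₁ d₂ hne
  set v : EuclideanSpace ℝ (Fin n) :=
    (d₁ : EuclideanSpace ℝ (Fin n)) - (d₂ : EuclideanSpace ℝ (Fin n)) with hv
  have hvne : v ≠ 0 := sub_ne_zero.mpr (Subtype.coe_injective.ne hne)
  have hvnorm : (0:ℝ) < ‖v‖ := norm_pos_iff.mpr hvne
  set c : ℝ := Real.pi / (k * ‖v‖ ^ 2) with hcdef
  set x : EuclideanSpace ℝ (Fin n) := c • v with hx
  refine ⟨char n k x, ⟨char n k x, Submodule.subset_span ⟨x, rfl⟩, rfl⟩, ?_⟩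
  set S₁ : ℝ := ∑ i, x i * (d₁ : EuclideanSpace ℝ (Fin n)) i with hS₁
  set S₂ : ℝ := ∑ i, x i * (d₂ : EuclideanSpace ℝ (Fin n)) i with hS₂
  have hdiff : S₁ - S₂ = Real.pi / k := by
    rw [hS₁, hS₂, ip_eq_inner, ip_eq_inner, ← inner_sub_right]
    have : (inner ℝ x v : ℝ) = c * ‖v‖ ^ 2 := by
      rw [hx, real_inner_smul_left, real_inner_self_eq_norm_sq]
    rw [← hv, this, hcdef]
    field_simp
  show Complex.exp (Complex.I * k * (S₁ : ℂ)) ≠ Complex.exp (Complex.I * k * (S₂ : ℂ))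
  intro hEq
  have hS1 : (S₁ : ℝ) = S₂ + Real.pi / k := by linarith
  have hk' : (k : ℂ) ≠ 0 := by exact_mod_cast hk.ne'
  have harg : Complex.I * k * (S₁ : ℂ) = Complex.I * k * (S₂ : ℂ) + Complex.I * Real.pi := by
    rw [hS1]
    push_cast
    field_simp
  rw [harg, Complex.exp_add] at hEq
  have hpi : Complex.exp (Complex.I * Real.pi) = -1 := by
    rw [mul_comm]; exact Complex.exp_pi_mul_I
  rw [hpi] at hEq
  have := Complex.exp_ne_zero (Complex.I * k * (S₂ : ℂ))
  apply this
  linear_combination (-1/2 : ℂ) * hEq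

private lemma stepB {μ : Measure Sph} [IsFiniteMeasure μ] {g : Sph → ℂ}
    (hgi : Integrable g μ) {k : ℝ} (hk : 0 < k)
    (hall : ∀ x : EuclideanSpace ℝ (Fin n), ∫ d, (char n k x) d * g d ∂μ = 0)
    (f : C(Sph, ℂ)) : ∫ d, f d * g d ∂μ = 0 := by
  have hfint : ∀ f : C(Sph, ℂ), Integrable (fun d => f d * g d) μ := fun f =>
    hgi.bdd_mul f.continuous.aestronglyMeasurable (Eventually.of_forall fun d => f.norm_coe_le_norm d)
  set L : C(Sph, ℂ) → ℂ := fun f => ∫ d, f d * g d ∂μ with hL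
  have hlip : LipschitzWith ⟨∫ d, ‖g d‖ ∂μ, integral_nonneg fun d => norm_nonneg _⟩ L := by
    refine LipschitzWith.of_dist_le_mul fun f₁ f₂ => ?_
    rw [dist_eq_norm, hL]
    simp only
    rw [← integral_sub (hfint f₁) (hfint f₂)]
    have h1 : ∀ d, f₁ d * g d - f₂ d * g d = (f₁ d - f₂ d) * g d := fun d => by ring
    simp only [h1]
    calc ‖∫ d, (f₁ d - f₂ d) * g d ∂μ‖ ≤ ∫ d, ‖(f₁ d - f₂ d) * g d‖ ∂μ :=
          norm_integral_le_integral_norm _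
      _ ≤ ∫ d, dist f₁ f₂ * ‖g d‖ ∂μ := by
          refine integral_mono_of_nonneg (Eventually.of_forall fun d => norm_nonneg _)
            (hgi.norm.const_mul _) (Eventually.of_forall fun d => ?_)
          simp only
          rw [norm_mul]
          exact mul_le_mul_of_nonneg_right
            (by simpa [dist_eq_norm] using ContinuousMap.dist_apply_le_dist (f := f₁) (g := f₂) d)
            (norm_nonneg _)
      _ = (∫ d, ‖g d‖ ∂μ) * dist f₁ f₂ := by rw [integral_const_mul]; ring
  have hclosed : IsClosed {f : C(Sph, ℂ) | L f = 0} :=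
    isClosed_singleton.preimage hlip.continuous
  -- the span is contained in the kernel of L
  have hSm : ∀ f ∈ Submodule.span ℂ (Set.range (char n k)), L f = 0 := by
    intro f hf
    induction hf using Submodule.span_induction with
    | mem f hf => obtain ⟨x, rfl⟩ := hf; exact hall x
    | zero => simp [hL]
    | add f₁ f₂ h₁ h₂ hh₁ hh₂ =>
      rw [hL]
      simp only
      have : ∀ d, (f₁ + f₂) d * g d = f₁ d * g d + f₂ d * g d := fun d => by
        simp [ContinuousMap.add_apply]; ring
      simp only [this]
      rw [integral_add (hfint f₁) (hfint f₂)]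
      simp only [hL] at hh₁ hh₂
      rw [hh₁, hh₂, add_zero]
    | smul c f hf hh =>
      rw [hL]
      simp only
      have : ∀ d, (c • f) d * g d = c * (f d * g d) := fun d => by
        simp [ContinuousMap.smul_apply]; ring
      simp only [this]
      rw [integral_const_mul]
      simp only [hL] at hh
      rw [hh, mul_zero]
  -- Stone–Weierstrass
  have htop : (charAlg n k).topologicalClosure = ⊤ :=
    ContinuousMap.starSubalgebra_topologicalClosure_eq_top_of_separatesPoints
      (charAlg n k) (charAlg_separates k hk)
  have hmem : f ∈ closure ((charAlg n k : Set C(Sph, ℂ))) := by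
    have : f ∈ (charAlg n k).topologicalClosure := by rw [htop]; trivial
    exact this
  exact closure_minimal (fun f hf => hSm f hf) hclosed hmem

private lemma stepC {μ : Measure Sph} [IsFiniteMeasure μ] {g : Sph → ℂ}
    (hg : MemLp g 2 μ)
    (hC : ∀ f : C(Sph, ℂ), ∫ d, f d * g d ∂μ = 0) : g =ᵐ[μ] 0 := by
  haveI : Fact ((1:ENNReal) ≤ 2) := ⟨by norm_num⟩
  set G := hg.toLp g with hG
  have hinner : ∀ f : C(Sph, ℂ), (inner ℂ ((ContinuousMap.toLp 2 μ ℂ) f) G : ℂ) = 0 := by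
    intro f
    rw [MeasureTheory.L2.inner_def]
    have h1 : ∀ᵐ d ∂μ, (inner ℂ (((ContinuousMap.toLp 2 μ ℂ) f : Lp ℂ 2 μ) d) (G d) : ℂ)
        = (star f) d * g d := by
      filter_upwards [ContinuousMap.coeFn_toLp (p := 2) (μ := μ) (𝕜 := ℂ) f,
        hg.coeFn_toLp] with d h₁ h₂
      rw [h₁, h₂]
      simp [RCLike.inner_apply, ContinuousMap.star_apply, mul_comm]
    rw [integral_congr_ae h1]
    exact hC (star f)
  have hGzero : G = 0 := by
    have hd := ContinuousMap.toLp_denseRange (α := Sph) (E := ℂ) (μ := μ) ℂ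
      (by norm_num : (2:ENNReal) ≠ ⊤)
    have hcl : IsClosed {v : Lp ℂ 2 μ | (inner ℂ v G : ℂ) = 0} :=
      isClosed_eq (continuous_id.inner continuous_const) continuous_const
    have hall : ∀ v : Lp ℂ 2 μ, (inner ℂ v G : ℂ) = 0 := by
      intro v
      have hv : v ∈ closure (Set.range ((ContinuousMap.toLp 2 μ ℂ)
          : C(Sph, ℂ) →L[ℂ] Lp ℂ 2 μ)) := by
        rw [hd.closure_range]; trivial
      exact closure_minimal (by rintro _ ⟨f, rfl⟩; exact hinner f) hcl hv
    simpa [inner_self_eq_zero] using hall G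
  have h1 : g =ᵐ[μ] ⇑G := (hg.coeFn_toLp).symm
  have h2 : ⇑G =ᵐ[μ] (0 : Sph → ℂ) := by
    rw [hGzero]
    exact Lp.coeFn_zero ℂ 2 μ
  exact h1.trans h2




open MeasureTheory Metric

/-- Injectivity of the Herglotz operator: if the Herglotz wave
`v_g(x) = ∫_{S^{n-1}} e^{ikx·d} g(d) ds(d)` with density `g ∈ L²(S^{n-1})` vanishes on a
nonempty open subset of `ℝⁿ`, then `g = 0` a.e. on the sphere. -/
theorem stmt9 {n : ℕ} (hn : 2 ≤ n) (k : ℝ) (hk : 0 < k)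
    (g : sphere (0 : EuclideanSpace ℝ (Fin n)) 1 → ℂ)
    (hg : MemLp g 2 (volume : Measure (EuclideanSpace ℝ (Fin n))).toSphere)
    (U : Set (EuclideanSpace ℝ (Fin n))) (hU : IsOpen U) (hUne : U.Nonempty)
    (hvg : ∀ x ∈ U,
      ∫ d, Complex.exp (Complex.I * k *
          ((∑ i, x i * (d : EuclideanSpace ℝ (Fin n)) i : ℝ) : ℂ)) * g d
        ∂(volume : Measure (EuclideanSpace ℝ (Fin n))).toSphere = 0) :
    g =ᵐ[(volume : Measure (EuclideanSpace ℝ (Fin n))).toSphere] 0 := by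
  set μ := (volume : Measure (EuclideanSpace ℝ (Fin n))).toSphere with hμ
  have hgi : Integrable g μ := hg.integrable (by norm_num)
  obtain ⟨x₀, hx₀⟩ := hUne
  obtain ⟨ε, hε, hball⟩ := Metric.isOpen_iff.mp hU x₀ hx₀
  have hall : ∀ x : EuclideanSpace ℝ (Fin n), ∫ d, (char n k x) d * g d ∂μ = 0 := by
    intro x
    have h := stepA hgi k hε (fun y hy => hvg y (hball hy)) x
    simpa only [char, ContinuousMap.coe_mk] using h
  exact stepC hg (stepB hgi hk hall)
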